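/- If $R$ is a ring such that every square matrix over $R$ admits diagonal reduction (i.e., $R$ is an elementary divisor ring), then for every $n \geq 2$, every element of the matrix ring $\mathbb{M}_n(R)$ is the sum of two units. -/

import Mathlib

lemma lowtri_pow_eq_zero {R : Type*} [Ring R] {n : ℕ} (M : Matrix (Fin n) (Fin n) R)
    (h : ∀ i j : Fin n, (i : ℕ) ≤ j → M i j = 0) : M ^ n = 0 := by
  have key : ∀ k (i j : Fin n), (i : ℕ) < (j : ℕ) + k → (M ^ k) i j = 0 := by
    intro k
    induction k with
    | zero =>
      intro i j hij
      rw [pow_zero, Matrix.one_apply_ne]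
      intro hij'; subst hij'; omega
    | succ k ih =>
      intro i j hij
      rw [pow_succ, Matrix.mul_apply]
      apply Finset.sum_eq_zero
      intro l _
      by_cases hl : (i : ℕ) < (l : ℕ) + k
      · rw [ih i l hl, zero_mul]
      · rw [h l j (by omega), mul_zero]
  ext i j
  simpa using key n i j (by omega)

lemma diag_sum_two_units {R : Type*} [Ring R] {n : ℕ} (hn : 2 ≤ n)
    (D : Matrix (Fin n) (Fin n) R) (hD : D.IsDiag) :
    ∃ U V : Matrix (Fin n) (Fin n) R, IsUnit U ∧ IsUnit V ∧ D = U + V := by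
  haveI : NeZero n := ⟨by omega⟩
  have hval1 : ((1 : Fin n) : ℕ) = 1 := by
    rw [Fin.val_one']; exact Nat.mod_eq_of_lt (by omega)
  set i0 : Fin n := ⟨0, by omega⟩ with hi0
  set iN : Fin n := ⟨n - 1, by omega⟩ with hiN
  have hvi0 : (i0 : ℕ) = 0 := rfl
  have hviN : (iN : ℕ) = n - 1 := rfl
  have hiN1 : iN + 1 = i0 := by
    apply Fin.ext
    rw [Fin.val_add, hval1, hvi0, hviN, Nat.sub_add_cancel (by omega), Nat.mod_self]
  have hNe : iN ≠ i0 := by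
    intro h
    have := congrArg Fin.val h
    rw [hvi0, hviN] at this
    omega
  set C : Matrix (Fin n) (Fin n) R := Matrix.of fun i j => if i + 1 = j then 1 else 0 with hC
  set C' : Matrix (Fin n) (Fin n) R := Matrix.of fun i j => if i = j + 1 then 1 else 0 with hC'
  have hCC' : C * C' = 1 := by
    ext i j
    rw [Matrix.mul_apply, Finset.sum_eq_single (i + 1)]
    · simp [hC, hC', Matrix.one_apply, add_left_inj]
    · intro k _ hk
      simp [hC, Ne.symm hk]
    · simp
  have hC'C : C' * C = 1 := by
    ext i j
    rw [Matrix.mul_apply, Finset.sum_eq_single (j - 1)]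
    · simp [hC, hC', Matrix.one_apply, sub_add_cancel]
    · intro k _ hk
      have : k + 1 ≠ j := fun h => hk (by rw [← h]; abel)
      simp [hC, this]
    · simp
  have hCU : IsUnit C := ⟨⟨C, C', hCC', hC'C⟩, rfl⟩
  set d : R := D iN iN with hd
  set S : Matrix (Fin n) (Fin n) R := Matrix.single iN iN d with hS
  set U : Matrix (Fin n) (Fin n) R := C + S with hU
  set E : Matrix (Fin n) (Fin n) R := Matrix.single i0 iN d with hE
  have hC'S : C' * S = E := by
    ext a b
    simp only [hC', hS, hE, Matrix.mul_apply, Matrix.of_apply, Matrix.single]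
    rw [Finset.sum_eq_single iN]
    · by_cases hb : iN = b
      · subst hb
        simp [hiN1, eq_comm]
      · simp [hb]
    · intro k _ hk
      simp [Ne.symm hk]
    · simp
  have hEnil : IsNilpotent E := by
    refine ⟨2, ?_⟩
    rw [pow_two, hE]
    exact Matrix.single_mul_single_of_ne (i := i0) (j := iN) (k := i0) (c := d) (h := hNe) (d := d)
  have hUunit : IsUnit U := by
    have h1 : C' * U = 1 + E := by rw [hU, mul_add, hC'C, hC'S]
    have h2 : U = C * (1 + E) := by
      rw [← h1, ← mul_assoc, hCC', one_mul]
    rw [h2]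
    exact hCU.mul hEnil.isUnit_one_add
  set D' : Matrix (Fin n) (Fin n) R := D - S with hD'
  set N : Matrix (Fin n) (Fin n) R := -(C' * D') with hN
  have hNlow : ∀ i j : Fin n, (i : ℕ) ≤ j → N i j = 0 := by
    intro a b hab
    rw [hN, Matrix.neg_apply, neg_eq_zero, Matrix.mul_apply]
    apply Finset.sum_eq_zero
    intro k _
    by_cases h1 : a = k + 1
    · have hDk : D' k b = 0 := by
        by_cases h2 : k = b
        · subst h2
          by_cases h3 : k = iN
          · subst h3
            simp [hD', hS, hd]
          · exfalso
            have hklt : (k : ℕ) < n - 1 := by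
              have h4 := k.isLt
              have h5 : (k : ℕ) ≠ n - 1 := fun h => h3 (Fin.ext (by rw [h, hviN]))
              omega
            have h6 : ((k + 1 : Fin n) : ℕ) = (k : ℕ) + 1 := by
              rw [Fin.val_add, hval1, Nat.mod_eq_of_lt (by omega)]
            rw [h1] at hab
            rw [h6] at hab
            omega
        · have hSkb : S k b = 0 := by
            apply Matrix.single_apply_of_ne
            rintro ⟨rfl, rfl⟩
            exact h2 rfl
          rw [hD', Matrix.sub_apply, hD h2, hSkb, sub_zero]
      rw [hDk, mul_zero]
    · simp [hC', h1]
  have hNnil : IsNilpotent N := ⟨n, lowtri_pow_eq_zero N hNlow⟩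
  set V : Matrix (Fin n) (Fin n) R := D' - C with hV
  have hVunit : IsUnit V := by
    have h2 : V = (-C) * (1 + N) := by
      rw [hV, hN, mul_add, mul_one, neg_mul_neg, ← mul_assoc, hCC', one_mul]
      abel
    rw [h2]
    exact hCU.neg.mul hNnil.isUnit_one_add
  refine ⟨U, V, hUunit, hVunit, ?_⟩
  rw [hU, hV, hD']
  abel

/-- If `R` is an elementary divisor ring (every square matrix admits diagonal reduction),
then for every `n ≥ 2`, every element of `Matrix (Fin n) (Fin n) R` is a sum of two units. -/
theorem elementary_divisor_ring_matrix_sum_two_units (R : Type*) [Ring R]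
    (hEDR : ∀ (m : ℕ) (A : Matrix (Fin m) (Fin m) R),
      ∃ P Q : Matrix (Fin m) (Fin m) R, IsUnit P ∧ IsUnit Q ∧ (P * A * Q).IsDiag)
    (n : ℕ) (hn : 2 ≤ n) (A : Matrix (Fin n) (Fin n) R) :
    ∃ U V : Matrix (Fin n) (Fin n) R, IsUnit U ∧ IsUnit V ∧ A = U + V := by
  obtain ⟨P, Q, hP, hQ, hdiag⟩ := hEDR n A
  obtain ⟨p, hp⟩ := hP
  obtain ⟨q, hq⟩ := hQ
  obtain ⟨U, V, hU, hV, hUV⟩ := diag_sum_two_units hn (P * A * Q) hdiag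
  set pinv : Matrix (Fin n) (Fin n) R := Units.val p⁻¹ with hpinv
  set qinv : Matrix (Fin n) (Fin n) R := Units.val q⁻¹ with hqinv
  refine ⟨pinv * U * qinv, pinv * V * qinv, ?_, ?_, ?_⟩
  · rw [hpinv, hqinv]; exact (p⁻¹.isUnit.mul hU).mul q⁻¹.isUnit
  · rw [hpinv, hqinv]; exact (p⁻¹.isUnit.mul hV).mul q⁻¹.isUnit
  have hA : pinv * (P * A * Q) * qinv = A := by
    rw [hpinv, hqinv, ← hp, ← hq, mul_assoc, Units.mul_inv_cancel_right, Units.inv_mul_cancel_left]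
  rw [← hA, hUV, mul_add, add_mul]
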